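/- Let Γ be the subgroup of SL(2,ℝ) generated by the five matrices γ₁ = [[1,1],[0,1]], γ₂ = [[0, −1/√11],[√11, 0]], γ₃ = [[√11, 5/√11],[2√11, √11]], γ₄ = [[10,3],[33,10]], γ₅ = [[23,8],[66,23]]. Then Γ is a discrete subgroup of SL(2,ℝ) (i.e. Γ carries the discrete topology as a subspace of SL(2,ℝ)). -/

import Mathlib

open Matrix
open scoped MatrixGroups

/-- The topology on `SL(2,ℝ)` induced from the space of 2×2 real matrices. -/
def slTopology : TopologicalSpace SL(2, ℝ) :=
  TopologicalSpace.induced (fun g => (g : Matrix (Fin 2) (Fin 2) ℝ)) inferInstance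

/-- A subgroup of `SL(2,ℝ)` is discrete if it carries the discrete topology as a
subspace of `SL(2,ℝ)`. -/
def IsDiscreteSubgroup (Γ : Subgroup SL(2, ℝ)) : Prop :=
  @DiscreteTopology Γ (TopologicalSpace.induced (Subtype.val : Γ → SL(2, ℝ)) slTopology)

/-- `γ₁ = [[1,1],[0,1]]`. -/
def gamma1 : SL(2, ℝ) := ⟨!![1, 1; 0, 1], by norm_num [Matrix.det_fin_two_of]⟩

/-- `γ₂ = [[0, −1/√11],[√11, 0]]`. -/
noncomputable def gamma2 : SL(2, ℝ) :=
  ⟨!![0, -1 / Real.sqrt 11; Real.sqrt 11, 0], by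
    have h : Real.sqrt 11 ≠ 0 := by positivity
    rw [Matrix.det_fin_two_of]
    field_simp
    norm_num⟩

/-- `γ₃ = [[√11, 5/√11],[2√11, √11]]`. -/
noncomputable def gamma3 : SL(2, ℝ) :=
  ⟨!![Real.sqrt 11, 5 / Real.sqrt 11; 2 * Real.sqrt 11, Real.sqrt 11], by
    have h11 : Real.sqrt 11 * Real.sqrt 11 = 11 :=
      Real.mul_self_sqrt (by norm_num)
    have h : Real.sqrt 11 ≠ 0 := by positivity
    rw [Matrix.det_fin_two_of]
    field_simp
    nlinarith [h11]⟩

/-- `γ₄ = [[10,3],[33,10]]`. -/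
def gamma4 : SL(2, ℝ) := ⟨!![10, 3; 33, 10], by norm_num [Matrix.det_fin_two_of]⟩

/-- `γ₅ = [[23,8],[66,23]]`. -/
def gamma5 : SL(2, ℝ) := ⟨!![23, 8; 66, 23], by norm_num [Matrix.det_fin_two_of]⟩

noncomputable def ent (g : SL(2, ℝ)) (i j : Fin 2) : ℝ :=
  ((g : Matrix (Fin 2) (Fin 2) ℝ)) i j

lemma ent_mul (g h : SL(2, ℝ)) (i j : Fin 2) :
    ent (g * h) i j = ent g i 0 * ent h 0 j + ent g i 1 * ent h 1 j := by
  simp [ent, Matrix.mul_apply, Fin.sum_univ_two]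

lemma ent_inv (g : SL(2, ℝ)) :
    ent g⁻¹ 0 0 = ent g 1 1 ∧ ent g⁻¹ 0 1 = -ent g 0 1 ∧
    ent g⁻¹ 1 0 = -ent g 1 0 ∧ ent g⁻¹ 1 1 = ent g 0 0 := by
  rw [show g⁻¹ = (⟨![![g.1 1 1, -g.1 0 1], ![-g.1 1 0, g.1 0 0]],
      Matrix.SpecialLinearGroup.SL2_inv_expl_det g⟩ : SL(2,ℝ)) from
      Matrix.SpecialLinearGroup.SL2_inv_expl g]
  refine ⟨rfl, rfl, rfl, rfl⟩

def T1 (g : SL(2, ℝ)) : Prop :=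
  ∃ a b c d : ℤ, ent g 0 0 = a ∧ ent g 0 1 = b ∧ ent g 1 0 = 11 * c ∧ ent g 1 1 = d

def T2 (g : SL(2, ℝ)) : Prop :=
  ∃ a b c d : ℤ, ent g 0 0 = a * Real.sqrt 11 ∧ ent g 0 1 = b / Real.sqrt 11 ∧
    ent g 1 0 = c * Real.sqrt 11 ∧ ent g 1 1 = d * Real.sqrt 11

lemma sqrt11_mul_self : Real.sqrt 11 * Real.sqrt 11 = 11 :=
  Real.mul_self_sqrt (by norm_num)

lemma sqrt11_ne : Real.sqrt 11 ≠ 0 := by positivity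

set_option maxHeartbeats 1000000 in
noncomputable def H : Subgroup SL(2, ℝ) where
  carrier := {g | T1 g ∨ T2 g}
  one_mem' := by
    left
    exact ⟨1, 0, 0, 1, by simp [ent], by simp [ent], by simp [ent], by simp [ent]⟩
  mul_mem' := by
    have hs := sqrt11_mul_self
    have hn := sqrt11_ne
    rintro g h (⟨a,b,c,d,h1,h2,h3,h4⟩|⟨a,b,c,d,h1,h2,h3,h4⟩)
        (⟨a',b',c',d',k1,k2,k3,k4⟩|⟨a',b',c',d',k1,k2,k3,k4⟩)
    · left
      refine ⟨a*a' + 11*b*c', a*b' + b*d', c*a' + d*c', 11*c*b' + d*d', ?_, ?_, ?_, ?_⟩ <;>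
        simp only [ent_mul, h1, h2, h3, h4, k1, k2, k3, k4] <;> push_cast <;> ring
    · right
      refine ⟨a*a' + b*c', a*b' + 11*b*d', 11*c*a' + d*c', c*b' + d*d', ?_, ?_, ?_, ?_⟩
      · rw [ent_mul, h1, h2, k1, k3]; push_cast; ring
      · rw [ent_mul, h1, h2, k2, k4]; push_cast; field_simp
        linear_combination ((b:ℝ) * d') * hs
      · rw [ent_mul, h3, h4, k1, k3]; push_cast; ring
      · rw [ent_mul, h3, h4, k2, k4]; push_cast; field_simp
        linear_combination (-(c:ℝ) * b') * hs
    · right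
      refine ⟨a*a' + b*c', 11*a*b' + b*d', c*a' + 11*d*c', c*b' + d*d', ?_, ?_, ?_, ?_⟩
      · rw [ent_mul, h1, h2, k1, k3]; push_cast; field_simp
        linear_combination (-(b:ℝ) * c') * hs
      · rw [ent_mul, h1, h2, k2, k4]; push_cast; field_simp
        linear_combination ((a:ℝ) * b') * hs
      · rw [ent_mul, h3, h4, k1, k3]; push_cast; ring
      · rw [ent_mul, h3, h4, k2, k4]; push_cast; ring
    · left
      refine ⟨11*a*a' + b*c', a*b' + b*d', c*a' + d*c', c*b' + 11*d*d', ?_, ?_, ?_, ?_⟩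
      · rw [ent_mul, h1, h2, k1, k3]; push_cast; field_simp
        linear_combination ((a:ℝ) * a') * hs
      · rw [ent_mul, h1, h2, k2, k4]; push_cast; field_simp
      · rw [ent_mul, h3, h4, k1, k3]; push_cast
        linear_combination ((c:ℝ) * a' + (d:ℝ) * c') * hs
      · rw [ent_mul, h3, h4, k2, k4]; push_cast; field_simp
        linear_combination ((d:ℝ) * d') * hs
  inv_mem' := by
    rintro g (⟨a,b,c,d,h1,h2,h3,h4⟩|⟨a,b,c,d,h1,h2,h3,h4⟩)
    · left
      obtain ⟨e1, e2, e3, e4⟩ := ent_inv g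
      exact ⟨d, -b, -c, a, by rw [e1, h4], by rw [e2, h2]; push_cast; ring,
        by rw [e3, h3]; push_cast; ring, by rw [e4, h1]⟩
    · right
      obtain ⟨e1, e2, e3, e4⟩ := ent_inv g
      exact ⟨d, -b, -c, a, by rw [e1, h4], by rw [e2, h2]; push_cast; ring,
        by rw [e3, h3]; push_cast; ring, by rw [e4, h1]⟩

lemma prod_int {g : SL(2, ℝ)} (hg : g ∈ H) (i j k l : Fin 2) :
    ∃ n : ℤ, 11 * (ent g i j * ent g k l) = n := by
  have hs := sqrt11_mul_self
  have hn := sqrt11_ne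
  rcases hg with ⟨a,b,c,d,h1,h2,h3,h4⟩ | ⟨a,b,c,d,h1,h2,h3,h4⟩
  · have e : ∀ i j : Fin 2, ∃ z : ℤ, ent g i j = z := by
      intro i j
      fin_cases i <;> fin_cases j
      exacts [⟨a, h1⟩, ⟨b, h2⟩, ⟨11*c, by push_cast; exact h3⟩, ⟨d, h4⟩]
    obtain ⟨z, hz⟩ := e i j
    obtain ⟨w, hw⟩ := e k l
    exact ⟨11*z*w, by rw [hz, hw]; push_cast; ring⟩
  · have e : ∀ i j : Fin 2, ∃ z : ℤ,
        ent g i j = z * Real.sqrt 11 ∨ ent g i j = z / Real.sqrt 11 := by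
      intro i j
      fin_cases i <;> fin_cases j
      exacts [⟨a, Or.inl h1⟩, ⟨b, Or.inr h2⟩, ⟨c, Or.inl h3⟩, ⟨d, Or.inl h4⟩]
    obtain ⟨z, hz | hz⟩ := e i j <;> obtain ⟨w, hw | hw⟩ := e k l
    · exact ⟨121*z*w, by rw [hz, hw]; push_cast; linear_combination (11*(z:ℝ)*w) * hs⟩
    · exact ⟨11*z*w, by rw [hz, hw]; push_cast; field_simp⟩
    · exact ⟨11*z*w, by rw [hz, hw]; push_cast; field_simp⟩
    · exact ⟨z*w, by rw [hz, hw]; push_cast; field_simp; linear_combination (-((z:ℝ) * w)) * hs⟩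

lemma isolated (g : SL(2, ℝ)) (hg : g ∈ H) :
    ∃ ε > 0, ∀ h : SL(2, ℝ), h ∈ H → (∀ i j, |ent h i j - ent g i j| < ε) → h = g := by
  obtain ⟨i₀, j₀, ha⟩ : ∃ i j, ent g i j ≠ 0 := by
    by_contra hcon
    push_neg at hcon
    have hdet := g.2
    rw [Matrix.det_fin_two] at hdet
    have e00 := hcon 0 0
    have e01 := hcon 0 1
    have e10 := hcon 1 0
    have e11 := hcon 1 1
    simp only [ent] at e00 e01 e10 e11
    rw [e00, e01, e10, e11] at hdet
    norm_num at hdet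
  set M : ℝ := |ent g 0 0| + |ent g 0 1| + |ent g 1 0| + |ent g 1 1| with hM_def
  have hM : ∀ i j, |ent g i j| ≤ M := by
    have n00 := abs_nonneg (ent g 0 0)
    have n01 := abs_nonneg (ent g 0 1)
    have n10 := abs_nonneg (ent g 1 0)
    have n11 := abs_nonneg (ent g 1 1)
    intro i j
    fin_cases i <;> fin_cases j <;> simp only [Fin.isValue, Fin.zero_eta, Fin.mk_one, hM_def] <;> linarith
  have hM0 : 0 ≤ M := le_trans (abs_nonneg _) (hM 0 0)
  set ε : ℝ := min |ent g i₀ j₀| (1 / (22*M + 12)) with hε_def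
  have hεpos : 0 < ε := lt_min (abs_pos.2 ha) (by positivity)
  have hε1 : ε ≤ 1 / (22*M + 12) := min_le_right _ _
  have hεa : ε ≤ |ent g i₀ j₀| := min_le_left _ _
  refine ⟨ε, hεpos, ?_⟩
  intro h hh hclose
  have hprod : ∀ i j k l, ent h i j * ent h k l = ent g i j * ent g k l := by
    intro i j k l
    obtain ⟨n, hn⟩ := prod_int hg i j k l
    obtain ⟨m, hm⟩ := prod_int hh i j k l
    have hu' : |ent h i j| ≤ M + 1 := by
      have h1 := hclose i j
      have h2 := hM i j
      have h3 := abs_sub_abs_le_abs_sub (ent h i j) (ent g i j)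
      have h4 : ε ≤ 1 := le_trans hε1 (by rw [div_le_one (by linarith)]; linarith)
      linarith
    have key : |(m : ℝ) - n| < 1 := by
      rw [← hn, ← hm]
      have e1 : ent h i j * ent h k l - ent g i j * ent g k l
          = ent h i j * (ent h k l - ent g k l) + ent g k l * (ent h i j - ent g i j) := by
        ring
      have e2 : |ent h i j * ent h k l - ent g i j * ent g k l| ≤ (2*M + 1) * ε := by
        rw [e1]
        refine le_trans (abs_add_le _ _) ?_
        rw [abs_mul, abs_mul]
        have b1 : |ent h i j| * |ent h k l - ent g k l| ≤ (M+1) * ε :=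
          mul_le_mul hu' (le_of_lt (hclose k l)) (abs_nonneg _) (by linarith)
        have b2 : |ent g k l| * |ent h i j - ent g i j| ≤ M * ε :=
          mul_le_mul (hM k l) (le_of_lt (hclose i j)) (abs_nonneg _) hM0
        linarith
      have e3 : (2*M+1) * ε ≤ (2*M+1) / (22*M + 12) :=
        by rw [div_eq_mul_one_div]; exact mul_le_mul_of_nonneg_left hε1 (by linarith)
      have e4 : (2*M+1) / (22*M+12) < 1/11 := by
        rw [div_lt_div_iff₀ (by linarith) (by norm_num)]
        linarith
      calc |11 * (ent h i j * ent h k l) - 11 * (ent g i j * ent g k l)|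
          = 11 * |ent h i j * ent h k l - ent g i j * ent g k l| := by
            rw [← mul_sub, abs_mul]; norm_num
        _ ≤ 11 * ((2*M+1) * ε) := by linarith [e2]
        _ ≤ 11 * ((2*M+1) / (22*M+12)) :=
            mul_le_mul_of_nonneg_left e3 (by norm_num)
        _ < 1 := by
            rw [mul_div_assoc', div_lt_one (by linarith)]
            linarith
    have hmn : m = n := by
      have h2 : |((m - n : ℤ) : ℝ)| < 1 := by push_cast; exact key
      have h3 : |m - n| < 1 := by exact_mod_cast h2
      have h4 := abs_lt.mp h3
      omega
    have : (11:ℝ) * (ent h i j * ent h k l) = 11 * (ent g i j * ent g k l) := by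
      rw [hn, hm, hmn]
    linarith
  have ha' : ent h i₀ j₀ = ent g i₀ j₀ := by
    have hsq := hprod i₀ j₀ i₀ j₀
    rcases mul_self_eq_mul_self_iff.mp hsq with heq | heq
    · exact heq
    · exfalso
      have h1 := hclose i₀ j₀
      rw [heq] at h1
      have h2 : -ent g i₀ j₀ - ent g i₀ j₀ = -(2 * ent g i₀ j₀) := by ring
      rw [h2, abs_neg] at h1
      have h3 : |2 * ent g i₀ j₀| = 2 * |ent g i₀ j₀| := by
        rw [abs_mul]; norm_num
      rw [h3] at h1
      have h4 : 0 < |ent g i₀ j₀| := abs_pos.2 ha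
      linarith
  have hent : ∀ i j, ent h i j = ent g i j := by
    intro i j
    have hp := hprod i j i₀ j₀
    rw [ha'] at hp
    exact mul_right_cancel₀ ha hp
  apply Subtype.ext
  exact Matrix.ext fun i j => hent i j
lemma gamma1_mem : gamma1 ∈ H := by
  left
  refine ⟨1, 1, 0, 1, ?_, ?_, ?_, ?_⟩ <;> simp [ent, gamma1]

lemma gamma2_mem : gamma2 ∈ H := by
  right
  refine ⟨0, -1, 1, 0, ?_, ?_, ?_, ?_⟩ <;> simp [ent, gamma2]

lemma gamma3_mem : gamma3 ∈ H := by
  right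
  refine ⟨1, 5, 2, 1, ?_, ?_, ?_, ?_⟩ <;> simp [ent, gamma3]

lemma gamma4_mem : gamma4 ∈ H := by
  left
  refine ⟨10, 3, 3, 10, ?_, ?_, ?_, ?_⟩ <;> norm_num [ent, gamma4]

lemma gamma5_mem : gamma5 ∈ H := by
  left
  refine ⟨23, 8, 6, 23, ?_, ?_, ?_, ?_⟩ <;> norm_num [ent, gamma5]

/-- The subgroup of `SL(2,ℝ)` generated by `γ₁, γ₂, γ₃, γ₄, γ₅` is discrete. -/
theorem generated_subgroup_discrete :
    IsDiscreteSubgroup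
      (Subgroup.closure {gamma1, gamma2, gamma3, gamma4, gamma5}) := by
  have hsub : Subgroup.closure {gamma1, gamma2, gamma3, gamma4, gamma5} ≤ H := by
    rw [Subgroup.closure_le]
    intro x hx
    simp only [Set.mem_insert_iff, Set.mem_singleton_iff] at hx
    rcases hx with rfl | rfl | rfl | rfl | rfl
    exacts [gamma1_mem, gamma2_mem, gamma3_mem, gamma4_mem, gamma5_mem]
  set Γ := Subgroup.closure {gamma1, gamma2, gamma3, gamma4, gamma5} with hΓ
  letI tΓ : TopologicalSpace ↥Γ :=
    TopologicalSpace.induced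
      (fun x : ↥Γ => ((x : SL(2, ℝ)) : Matrix (Fin 2) (Fin 2) ℝ)) inferInstance
  have hdisc : DiscreteTopology ↥Γ := by
    rw [discreteTopology_iff_isOpen_singleton]
    intro x
    obtain ⟨ε, hε, hkey⟩ := isolated (x : SL(2, ℝ)) (hsub x.2)
    rw [isOpen_induced_iff]
    refine ⟨{m : Matrix (Fin 2) (Fin 2) ℝ |
      ∀ i j, |m i j - ent (x : SL(2, ℝ)) i j| < ε}, ?_, ?_⟩
    · have hset : {m : Matrix (Fin 2) (Fin 2) ℝ |
          ∀ i j, |m i j - ent (x : SL(2, ℝ)) i j| < ε}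
          = ⋂ i, ⋂ j, (fun m : Matrix (Fin 2) (Fin 2) ℝ => m i j) ⁻¹'
              Metric.ball (ent (x : SL(2, ℝ)) i j) ε := by
        ext m
        simp [Real.dist_eq]
      rw [hset]
      exact isOpen_iInter_of_finite fun i => isOpen_iInter_of_finite fun j =>
        Metric.isOpen_ball.preimage ((continuous_apply j).comp (continuous_apply i))
    · ext y
      simp only [Set.mem_preimage, Set.mem_setOf_eq, Set.mem_singleton_iff]
      constructor
      · intro hy
        exact Subtype.ext (hkey _ (hsub y.2) fun i j => hy i j)
      · rintro rfl
        intro i j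
        simp only [ent, sub_self, abs_zero]
        exact hε
  unfold IsDiscreteSubgroup
  have htop : TopologicalSpace.induced (Subtype.val : ↥Γ → SL(2, ℝ)) slTopology = tΓ := by
    rw [slTopology, induced_compose]; rfl
  exact htop ▸ hdisc
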